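/- Let Ω₁, Ω₂ be the Choi operators of two quantum channels on a d-dimensional Hilbert space, η₁+η₂=1 with η₁,η₂ ≥ 0, and let {M₀, M₁, M₂} be positive operators with M₀+M₁+M₂ = ξᵀ⊗I for some density operator ξ, satisfying the no-error conditions tr(M₁Ω₂) = tr(M₂Ω₁) = 0. Then the failure probability tr(M₀(η₁Ω₁+η₂Ω₂)) is at least 2√(η₁η₂) · tr|√Ω₁ (ξᵀ⊗I) √Ω₂|. -/

import Mathlib

open Matrix ComplexOrder Kronecker BigOperators

noncomputable def Matrix.PosSemidef.sqrt {n 𝕜 : Type*} [Fintype n] [RCLike 𝕜] [DecidableEq n]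
    {A : Matrix n n 𝕜} (hA : A.PosSemidef) : Matrix n n 𝕜 :=
  (hA.1.eigenvectorUnitary : Matrix n n 𝕜) * diagonal (((↑) : ℝ → 𝕜) ∘ Real.sqrt ∘ hA.1.eigenvalues) *
    (star hA.1.eigenvectorUnitary : Matrix n n 𝕜)

/-- Trace norm: tr|X| = tr √(Xᴴ X). -/
noncomputable def traceNorm {n : Type*} [Fintype n] [DecidableEq n] (X : Matrix n n ℂ) : ℝ :=
  ((Matrix.posSemidef_conjTranspose_mul_self X).sqrt).trace.re

set_option linter.unusedSectionVars false
set_option maxHeartbeats 1000000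

lemma Matrix.PosSemidef.posSemidef_sqrt {n : Type*} [Fintype n] [DecidableEq n]
    {A : Matrix n n ℂ} (hA : A.PosSemidef) : hA.sqrt.PosSemidef := by
  unfold Matrix.PosSemidef.sqrt
  have hD : (diagonal (((↑) : ℝ → ℂ) ∘ Real.sqrt ∘ hA.1.eigenvalues)).PosSemidef := by
    rw [posSemidef_diagonal_iff]
    intro i
    simp only [Function.comp_apply]
    exact_mod_cast Real.sqrt_nonneg _
  exact hD.mul_mul_conjTranspose_same _

lemma Matrix.PosSemidef.sqrt_mul_self {n : Type*} [Fintype n] [DecidableEq n]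
    {A : Matrix n n ℂ} (hA : A.PosSemidef) : hA.sqrt * hA.sqrt = A := by
  unfold Matrix.PosSemidef.sqrt
  have hU : (star hA.1.eigenvectorUnitary : Matrix n n ℂ) * (hA.1.eigenvectorUnitary : Matrix n n ℂ) = 1 :=
    Unitary.coe_star_mul_self _
  have h := hA.1.spectral_theorem
  rw [Unitary.conjStarAlgAut_apply] at h
  rw [show ∀ X Y Z X' Y' Z' : Matrix n n ℂ, X * Y * Z * (X' * Y' * Z') = X * (Y * (Z * X') * Y') * Z'
    from fun _ _ _ _ _ _ => by simp only [Matrix.mul_assoc], hU, Matrix.mul_one, diagonal_mul_diagonal]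
  have hd : (fun i => ((RCLike.ofReal : ℝ → ℂ) ∘ Real.sqrt ∘ hA.1.eigenvalues) i * ((RCLike.ofReal : ℝ → ℂ) ∘ Real.sqrt ∘ hA.1.eigenvalues) i)
      = (RCLike.ofReal ∘ hA.1.eigenvalues : n → ℂ) := by
    funext i
    simp only [Function.comp_apply]
    rw [← RCLike.ofReal_mul, Real.mul_self_sqrt (hA.eigenvalues_nonneg i)]
  rw [hd]
  exact h.symm

section Helpers
variable {n : Type*} [Fintype n] [DecidableEq n]


lemma trace_sqrt_eq {Q : Matrix n n ℂ} (hQ : Q.PosSemidef) :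
    hQ.sqrt.trace = ((∑ j, Real.sqrt (hQ.1.eigenvalues j) : ℝ) : ℂ) := by
  rw [Matrix.PosSemidef.sqrt, Matrix.trace_mul_cycle]
  rw [show (star hQ.1.eigenvectorUnitary : Matrix n n ℂ) * hQ.1.eigenvectorUnitary.1 = 1 from
    UnitaryGroup.star_mul_self _]
  rw [Matrix.one_mul, Matrix.trace_diagonal]
  push_cast
  rfl

lemma norm_eq_sqrt_dot (x : n → ℂ) :
    ‖(WithLp.equiv 2 (n → ℂ)).symm x‖ = Real.sqrt (dotProduct (star x) x).re := by
  have h := inner_self_eq_norm_sq (𝕜 := ℂ) ((WithLp.equiv 2 (n → ℂ)).symm x)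
  rw [EuclideanSpace.inner_eq_star_dotProduct] at h
  rw [show (dotProduct (star x) x).re = ‖(WithLp.equiv 2 (n → ℂ)).symm x‖^2 from by
    rw [← h, dotProduct_comm]; rfl]
  exact (Real.sqrt_sq (norm_nonneg _)).symm

lemma cs_vec (x y : n → ℂ) :
    ‖dotProduct (star x) y‖ ≤
      Real.sqrt (dotProduct (star x) x).re * Real.sqrt (dotProduct (star y) y).re := by
  have h := norm_inner_le_norm (𝕜 := ℂ)
    ((WithLp.equiv 2 (n → ℂ)).symm x) ((WithLp.equiv 2 (n → ℂ)).symm y)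
  rw [EuclideanSpace.inner_eq_star_dotProduct, norm_eq_sqrt_dot, norm_eq_sqrt_dot] at h
  rw [dotProduct_comm (star x) y]
  exact h

lemma adjoint_dot (M : Matrix n n ℂ) (x y : n → ℂ) :
    dotProduct (star x) (Mᴴ *ᵥ y) = dotProduct (star (M *ᵥ x)) y := by
  rw [Matrix.star_mulVec, ← dotProduct_mulVec]

lemma dot_eq_sum_normSq (x : n → ℂ) :
    dotProduct (star x) x = ((∑ i, Complex.normSq (x i) : ℝ) : ℂ) := by
  push_cast
  simp only [dotProduct, Pi.star_apply]
  congr 1; ext i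
  rw [Complex.star_def, mul_comm, Complex.mul_conj]

lemma dot_self_re_nonneg (x : n → ℂ) : 0 ≤ (dotProduct (star x) x).re := by
  rw [dot_eq_sum_normSq, Complex.ofReal_re]
  exact Finset.sum_nonneg fun i _ => Complex.normSq_nonneg _



lemma trace_cms (M : Matrix n n ℂ) :
    (Mᴴ * M).trace = ((∑ j, ∑ i, Complex.normSq (M i j) : ℝ) : ℂ) := by
  simp only [Matrix.trace, Matrix.diag, Matrix.mul_apply, Matrix.conjTranspose_apply]
  push_cast
  congr 1; ext j; congr 1; ext i
  rw [mul_comm, Complex.star_def, Complex.mul_conj]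

lemma trace_cms_re_nonneg (M : Matrix n n ℂ) : 0 ≤ (Mᴴ * M).trace.re := by
  rw [trace_cms, Complex.ofReal_re]
  exact Finset.sum_nonneg fun j _ => Finset.sum_nonneg fun i _ => Complex.normSq_nonneg _

lemma trace_cms_eq_zero {M : Matrix n n ℂ} (h : (Mᴴ * M).trace = 0) : M = 0 := by
  rw [trace_cms] at h
  norm_cast at h
  have := (Finset.sum_eq_zero_iff_of_nonneg (fun j _ => Finset.sum_nonneg fun i _ => Complex.normSq_nonneg _)).1 h
  ext i j
  have h2 := (Finset.sum_eq_zero_iff_of_nonneg (fun i _ => Complex.normSq_nonneg _)).1 (this j (Finset.mem_univ j)) i (Finset.mem_univ i)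
  simpa using Complex.normSq_eq_zero.mp h2

lemma trace_psd_mul_nonneg {P Q : Matrix n n ℂ} (hP : P.PosSemidef) (hQ : Q.PosSemidef) :
    0 ≤ (P * Q).trace.re := by
  have h : (P * Q).trace = ((hQ.sqrt * hP.sqrt)ᴴ * (hQ.sqrt * hP.sqrt)).trace := by
    rw [Matrix.conjTranspose_mul, hP.posSemidef_sqrt.1.eq, hQ.posSemidef_sqrt.1.eq]
    rw [show hP.sqrt * hQ.sqrt * (hQ.sqrt * hP.sqrt) = hP.sqrt * (hQ.sqrt * hQ.sqrt) * hP.sqrt by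
      simp only [Matrix.mul_assoc], hQ.sqrt_mul_self, Matrix.trace_mul_cycle, hP.sqrt_mul_self]
  rw [h]; exact trace_cms_re_nonneg _

lemma mul_sqrt_eq_zero {M O : Matrix n n ℂ} (hM : M.PosSemidef) (hO : O.PosSemidef)
    (h : (M * O).trace = 0) : M * hO.sqrt = 0 := by
  have key : (hM.sqrt * hO.sqrt)ᴴ * (hM.sqrt * hO.sqrt) = hO.sqrt * M * hO.sqrt := by
    rw [Matrix.conjTranspose_mul, hM.posSemidef_sqrt.1.eq, hO.posSemidef_sqrt.1.eq]
    rw [show hO.sqrt * hM.sqrt * (hM.sqrt * hO.sqrt) = hO.sqrt * (hM.sqrt * hM.sqrt) * hO.sqrt by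
      simp only [Matrix.mul_assoc], hM.sqrt_mul_self]
  have htr : ((hM.sqrt * hO.sqrt)ᴴ * (hM.sqrt * hO.sqrt)).trace = 0 := by
    rw [key, Matrix.trace_mul_cycle, hO.sqrt_mul_self, Matrix.trace_mul_comm, h]
  have hz : hM.sqrt * hO.sqrt = 0 := trace_cms_eq_zero htr
  calc M * hO.sqrt = hM.sqrt * (hM.sqrt * hO.sqrt) := by rw [← Matrix.mul_assoc, hM.sqrt_mul_self]
  _ = 0 := by rw [hz, Matrix.mul_zero]

-- quad

lemma trace_eq_sum_quad {Q : Matrix n n ℂ} (hQ : Q.IsHermitian) (M : Matrix n n ℂ) :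
    M.trace = ∑ j, dotProduct (star (fun i => (hQ.eigenvectorUnitary.1 : Matrix n n ℂ) i j))
      (M *ᵥ (fun i => (hQ.eigenvectorUnitary.1 : Matrix n n ℂ) i j)) := by
  have h1 : M.trace = ((star hQ.eigenvectorUnitary.1 : Matrix n n ℂ) * M * hQ.eigenvectorUnitary.1).trace := by
    rw [Matrix.trace_mul_cycle,
      show hQ.eigenvectorUnitary.1 * (star hQ.eigenvectorUnitary.1 : Matrix n n ℂ) = 1 from
        hQ.eigenvectorUnitary.2.2, Matrix.one_mul]
  rw [h1, Matrix.trace]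
  congr 1; ext j
  simp [Matrix.diag, Matrix.mul_apply, dotProduct, Matrix.mulVec, dotProduct,
    Finset.mul_sum, Finset.sum_mul, mul_assoc]
  rw [Finset.sum_comm]

theorem traceNorm_cs (A B : Matrix n n ℂ) :
    traceNorm (Aᴴ * B) ≤ Real.sqrt ((Aᴴ * A).trace.re) * Real.sqrt ((Bᴴ * B).trace.re) := by
  set X := Aᴴ * B with hX
  have hQ : (Xᴴ * X).PosSemidef := Matrix.posSemidef_conjTranspose_mul_self X
  set lam : n → ℝ := hQ.1.eigenvalues with hlam
  have hlamnn : ∀ j, 0 ≤ lam j := fun j => hQ.eigenvalues_nonneg j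
  set U : Matrix n n ℂ := hQ.1.eigenvectorUnitary.1 with hU
  set v : n → n → ℂ := fun j i => U i j with hv
  -- eigenvector equation
  have heig : ∀ j, (Xᴴ * X) *ᵥ v j = (lam j : ℂ) • v j := by
    intro j
    have h1 : v j = ⇑(hQ.1.eigenvectorBasis j) := by
      funext i; exact hQ.1.eigenvectorUnitary_apply i j
    rw [h1, hQ.1.mulVec_eigenvectorBasis]
    ext i
    simp [Complex.real_smul]
    exact Or.inl rfl
  -- orthonormality
  have horth : ∀ i j, dotProduct (star (v i)) (v j) = if i = j then 1 else 0 := by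
    intro i j
    have h1 : (star U * U) i j = (1 : Matrix n n ℂ) i j := by
      rw [show star U * U = 1 from UnitaryGroup.star_mul_self _]
    simpa [Matrix.mul_apply, dotProduct, Matrix.one_apply] using h1
  set w : n → n → ℂ := fun j => X *ᵥ v j with hw
  have hww : ∀ i j, dotProduct (star (w i)) (w j) = if i = j then (lam j : ℂ) else 0 := by
    intro i j
    have h1 : dotProduct (star (w i)) (w j)
        = dotProduct (star (v i)) ((Xᴴ * X) *ᵥ v j) := by
      rw [hw]
      rw [← Matrix.mulVec_mulVec, adjoint_dot]
    rw [h1, heig j, dotProduct_smul, horth i j]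
    by_cases h : i = j <;> simp [h]
  -- the numbers
  set b : n → ℝ := fun j => Real.sqrt ((dotProduct (star (B *ᵥ v j)) (B *ᵥ v j)).re) with hb
  set a : n → ℝ := fun j => (Real.sqrt (lam j))⁻¹ *
    Real.sqrt ((dotProduct (star (A *ᵥ w j)) (A *ᵥ w j)).re) with ha
  have hann : ∀ j, 0 ≤ a j := fun j =>
    mul_nonneg (inv_nonneg.mpr (Real.sqrt_nonneg _)) (Real.sqrt_nonneg _)
  have hbnn : ∀ j, 0 ≤ b j := fun j => Real.sqrt_nonneg _
  -- pointwise bound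
  have hpt : ∀ j, Real.sqrt (lam j) ≤ a j * b j := by
    intro j
    rcases eq_or_lt_of_le (hlamnn j) with h0 | hpos
    · rw [← h0, Real.sqrt_zero]
      exact mul_nonneg (hann j) (hbnn j)
    · have hs : 0 < Real.sqrt (lam j) := Real.sqrt_pos.mpr hpos
      have hkey : lam j ≤ (Real.sqrt (lam j) * a j) * b j := by
        have h1 : ((lam j : ℝ) : ℂ) = dotProduct (star (A *ᵥ w j)) (B *ᵥ v j) := by
          have h2 := hww j j
          rw [if_pos rfl] at h2
          have h3 : w j = Aᴴ *ᵥ (B *ᵥ v j) := by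
            show X *ᵥ v j = _
            rw [hX, ← Matrix.mulVec_mulVec]
          rw [← adjoint_dot, ← h3, h2]
        have h4 : lam j ≤ ‖dotProduct (star (A *ᵥ w j)) (B *ᵥ v j)‖ := by
          calc lam j = (dotProduct (star (A *ᵥ w j)) (B *ᵥ v j)).re := by
                rw [← h1, Complex.ofReal_re]
          _ ≤ ‖dotProduct (star (A *ᵥ w j)) (B *ᵥ v j)‖ := Complex.re_le_norm _
          _ ≤ _ := le_refl _
        have h5 := cs_vec (A *ᵥ w j) (B *ᵥ v j)
        have h6 : Real.sqrt (lam j) * a j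
            = Real.sqrt ((dotProduct (star (A *ᵥ w j)) (A *ᵥ w j)).re) := by
          rw [ha]; field_simp
        rw [h6]
        calc lam j ≤ ‖dotProduct (star (A *ᵥ w j)) (B *ᵥ v j)‖ := h4
        _ ≤ _ := h5
      nlinarith [Real.sq_sqrt (hlamnn j), hbnn j, hann j, hs]
  -- trace norm equals sum of sqrt eigenvalues
  have htn : traceNorm (Aᴴ * B) = ∑ j, Real.sqrt (lam j) := by
    have h1 : traceNorm (Aᴴ * B) = hQ.sqrt.trace.re := rfl
    rw [h1, trace_sqrt_eq hQ, Complex.ofReal_re]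
  -- sum of b squared
  have hbsq : ∑ j, b j ^ 2 = (Bᴴ * B).trace.re := by
    have h1 : ∀ j, b j ^ 2 = (dotProduct (star (v j)) ((Bᴴ * B) *ᵥ v j)).re := by
      intro j
      rw [hb]
      dsimp only
      rw [Real.sq_sqrt (dot_self_re_nonneg _), ← Matrix.mulVec_mulVec, adjoint_dot]
    simp only [h1]
    rw [← Complex.re_sum]
    congr 1
    exact (trace_eq_sum_quad hQ.1 (Bᴴ * B)).symm
  -- sum of a squared
  have hasq : ∑ j, a j ^ 2 ≤ (Aᴴ * A).trace.re := by
    set u : n → n → ℂ := fun j => (((Real.sqrt (lam j))⁻¹ : ℝ) : ℂ) • w j with hu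
    have hu0 : ∀ j, lam j = 0 → u j = 0 := by
      intro j h
      show (((Real.sqrt (lam j))⁻¹ : ℝ) : ℂ) • w j = 0
      rw [h]
      simp
    have hAu : ∀ j, A *ᵥ u j = (((Real.sqrt (lam j))⁻¹ : ℝ) : ℂ) • (A *ᵥ w j) := by
      intro j
      exact Matrix.mulVec_smul A _ (w j)
    have hdots : ∀ j, dotProduct (star (A *ᵥ u j)) (A *ᵥ u j)
        = ((((Real.sqrt (lam j))⁻¹ * (Real.sqrt (lam j))⁻¹ : ℝ)) : ℂ)
          * dotProduct (star (A *ᵥ w j)) (A *ᵥ w j) := by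
      intro j
      rw [hAu j, star_smul, smul_dotProduct, dotProduct_smul]
      rw [smul_smul, Complex.star_def, Complex.conj_ofReal, ← Complex.ofReal_mul]
      rw [smul_eq_mul]
    have hasq' : ∀ j, a j ^ 2 = (dotProduct (star (A *ᵥ u j)) (A *ᵥ u j)).re := by
      intro j
      rw [hdots j, Complex.re_ofReal_mul, ha]
      dsimp only
      rw [mul_pow, Real.sq_sqrt (dot_self_re_nonneg _)]
      ring
    set W : Matrix n n ℂ := Matrix.of (fun i j => u j i) with hW
    have hcol : ∀ j, (fun i => (A * W) i j) = A *ᵥ u j := by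
      intro j; funext i
      simp [hW, Matrix.mul_apply, Matrix.mulVec, dotProduct]
    have hsumtr : ∑ j, dotProduct (star (A *ᵥ u j)) (A *ᵥ u j)
        = ((A * W)ᴴ * (A * W)).trace := by
      rw [Matrix.trace]
      apply Finset.sum_congr rfl
      intro j _
      rw [← hcol j]
      simp only [Matrix.diag, Matrix.mul_apply, Matrix.conjTranspose_apply, dotProduct,
        Pi.star_apply, Complex.star_def, map_sum, _root_.map_mul]

    have hWW : Wᴴ * W = Matrix.diagonal (fun j => if lam j = 0 then 0 else (1:ℂ)) := by
      ext i j
      have h1 : (Wᴴ * W) i j = dotProduct (star (u i)) (u j) := by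
        simp [hW, Matrix.mul_apply, Matrix.conjTranspose_apply, dotProduct]
      rw [h1]
      show dotProduct (star ((((Real.sqrt (lam i))⁻¹ : ℝ) : ℂ) • w i))
        ((((Real.sqrt (lam j))⁻¹ : ℝ) : ℂ) • w j) = _
      rw [star_smul, smul_dotProduct, dotProduct_smul, hww i j]
      rw [Complex.star_def, Complex.conj_ofReal, smul_eq_mul, smul_eq_mul]
      by_cases h : i = j
      · subst h
        by_cases h0 : lam i = 0
        · simp [Matrix.diagonal, h0]
        · rw [if_pos rfl, Matrix.diagonal_apply_eq, if_neg h0]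
          rw [← Complex.ofReal_mul, ← Complex.ofReal_mul]
          norm_cast
          have hs : Real.sqrt (lam i) ≠ 0 :=
            ne_of_gt (Real.sqrt_pos.mpr (lt_of_le_of_ne (hlamnn i) (Ne.symm h0)))
          field_simp
          rw [Real.sq_sqrt (hlamnn i)]
      · simp [Matrix.diagonal_apply_ne _ h, h]
    set P : Matrix n n ℂ := W * Wᴴ with hP
    have hWe : W * Matrix.diagonal (fun j => if lam j = 0 then 0 else (1:ℂ)) = W := by
      ext i j
      rw [Matrix.mul_diagonal]
      by_cases h0 : lam j = 0
      · rw [if_pos h0, mul_zero]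
        show 0 = u j i
        rw [hu0 j h0]
        rfl
      · rw [if_neg h0, mul_one]
    have hPP : P * P = P := by
      rw [hP, show W * Wᴴ * (W * Wᴴ) = W * (Wᴴ * W) * Wᴴ by simp only [Matrix.mul_assoc], hWW, hWe]
    have hPH : Pᴴ = P := by
      rw [hP, Matrix.conjTranspose_mul, Matrix.conjTranspose_conjTranspose]
    have hIP : (1 - P).PosSemidef := by
      have h1 : (1 - P)ᴴ * (1 - P) = 1 - P := by
        have h5 : (1 - P) * (1 - P) = 1 - P := by
          rw [Matrix.sub_mul, Matrix.mul_sub, Matrix.mul_sub, hPP]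
          simp
        rw [Matrix.conjTranspose_sub, Matrix.conjTranspose_one, hPH, h5]
      rw [← h1]
      exact Matrix.posSemidef_conjTranspose_mul_self _
    have h2 : ((A * W)ᴴ * (A * W)).trace = ((Aᴴ * A) * P).trace := by
      rw [Matrix.conjTranspose_mul]
      rw [show Wᴴ * Aᴴ * (A * W) = Wᴴ * (Aᴴ * A * W) by simp only [Matrix.mul_assoc]]
      rw [Matrix.trace_mul_comm, Matrix.mul_assoc, hP]
    have h3 : 0 ≤ ((Aᴴ * A) * (1 - P)).trace.re :=
      trace_psd_mul_nonneg (Matrix.posSemidef_conjTranspose_mul_self A) hIP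
    have h4 : ((Aᴴ * A) * (1 - P)).trace = (Aᴴ * A).trace - ((Aᴴ * A) * P).trace := by
      rw [Matrix.mul_sub, Matrix.mul_one, Matrix.trace_sub]
    calc ∑ j, a j ^ 2 = ∑ j, (dotProduct (star (A *ᵥ u j)) (A *ᵥ u j)).re := by
          simp only [hasq']
    _ = ((A * W)ᴴ * (A * W)).trace.re := by rw [← Complex.re_sum, hsumtr]
    _ = ((Aᴴ * A) * P).trace.re := by rw [h2]
    _ ≤ (Aᴴ * A).trace.re := by
          have := h3
          rw [h4, Complex.sub_re] at this
          linarith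
  -- final assembly
  calc traceNorm (Aᴴ * B) = ∑ j, Real.sqrt (lam j) := htn
  _ ≤ ∑ j, a j * b j := Finset.sum_le_sum (fun j _ => hpt j)
  _ ≤ Real.sqrt (∑ j, a j ^ 2) * Real.sqrt (∑ j, b j ^ 2) :=
      Real.sum_mul_le_sqrt_mul_sqrt _ _ _
  _ ≤ Real.sqrt ((Aᴴ * A).trace.re) * Real.sqrt ((Bᴴ * B).trace.re) := by
      apply mul_le_mul (Real.sqrt_le_sqrt hasq) (le_of_eq (by rw [hbsq])) (Real.sqrt_nonneg _)
        (Real.sqrt_nonneg _)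


end Helpers

theorem stmt6 {d : ℕ}
    (Ω₁ Ω₂ : Matrix (Fin d × Fin d) (Fin d × Fin d) ℂ)
    (hΩ₁ : Ω₁.PosSemidef) (hΩ₂ : Ω₂.PosSemidef)
    -- Choi operators of (trace-preserving) channels: partial trace over the output is the identity
    (hTP₁ : ∀ j k : Fin d, ∑ m : Fin d, Ω₁ (j, m) (k, m) = if j = k then 1 else 0)
    (hTP₂ : ∀ j k : Fin d, ∑ m : Fin d, Ω₂ (j, m) (k, m) = if j = k then 1 else 0)
    (η₁ η₂ : ℝ) (hη₁ : 0 ≤ η₁) (hη₂ : 0 ≤ η₂) (hsum : η₁ + η₂ = 1)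
    (ξ : Matrix (Fin d) (Fin d) ℂ) (hξ : ξ.PosSemidef) (hξtr : ξ.trace = 1)
    (M₀ M₁ M₂ : Matrix (Fin d × Fin d) (Fin d × Fin d) ℂ)
    (hM₀ : M₀.PosSemidef) (hM₁ : M₁.PosSemidef) (hM₂ : M₂.PosSemidef)
    (hnorm : M₀ + M₁ + M₂ = ξᵀ ⊗ₖ (1 : Matrix (Fin d) (Fin d) ℂ))
    (hne₁ : (M₁ * Ω₂).trace = 0) (hne₂ : (M₂ * Ω₁).trace = 0) :
    ((M₀ * ((η₁ : ℂ) • Ω₁ + (η₂ : ℂ) • Ω₂)).trace).re ≥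
      2 * Real.sqrt (η₁ * η₂) *
        traceNorm (hΩ₁.sqrt * (ξᵀ ⊗ₖ (1 : Matrix (Fin d) (Fin d) ℂ)) * hΩ₂.sqrt) := by
  -- notation
  set S : Matrix (Fin d × Fin d) (Fin d × Fin d) ℂ := ξᵀ ⊗ₖ (1 : Matrix (Fin d) (Fin d) ℂ) with hS
  set A : Matrix (Fin d × Fin d) (Fin d × Fin d) ℂ := hM₀.sqrt * hΩ₁.sqrt with hA
  set B : Matrix (Fin d × Fin d) (Fin d × Fin d) ℂ := hM₀.sqrt * hΩ₂.sqrt with hB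
  have hz₁ : M₁ * hΩ₂.sqrt = 0 := mul_sqrt_eq_zero hM₁ hΩ₂ hne₁
  have hz₂ : M₂ * hΩ₁.sqrt = 0 := mul_sqrt_eq_zero hM₂ hΩ₁ hne₂
  have hz₂' : hΩ₁.sqrt * M₂ = 0 := by
    have h1 : (M₂ * hΩ₁.sqrt)ᴴ = hΩ₁.sqrt * M₂ := by
      rw [Matrix.conjTranspose_mul, hM₂.1.eq, hΩ₁.posSemidef_sqrt.1.eq]
    rw [← h1, hz₂, Matrix.conjTranspose_zero]
  have hSM : hΩ₁.sqrt * S * hΩ₂.sqrt = Aᴴ * B := by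
    have h1 : Aᴴ * B = hΩ₁.sqrt * M₀ * hΩ₂.sqrt := by
      rw [hA, hB, Matrix.conjTranspose_mul, hM₀.posSemidef_sqrt.1.eq, hΩ₁.posSemidef_sqrt.1.eq]
      rw [show hΩ₁.sqrt * hM₀.sqrt * (hM₀.sqrt * hΩ₂.sqrt)
          = hΩ₁.sqrt * (hM₀.sqrt * hM₀.sqrt) * hΩ₂.sqrt by simp only [Matrix.mul_assoc],
        hM₀.sqrt_mul_self]
    rw [h1, ← hnorm]
    rw [Matrix.mul_add, Matrix.mul_add, Matrix.add_mul, Matrix.add_mul]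
    rw [Matrix.mul_assoc hΩ₁.sqrt M₁ hΩ₂.sqrt, hz₁, Matrix.mul_zero, hz₂', Matrix.zero_mul,
      add_zero, add_zero]
  have ht₁ : (Aᴴ * A).trace = (M₀ * Ω₁).trace := by
    rw [hA, Matrix.conjTranspose_mul, hM₀.posSemidef_sqrt.1.eq, hΩ₁.posSemidef_sqrt.1.eq]
    rw [show hΩ₁.sqrt * hM₀.sqrt * (hM₀.sqrt * hΩ₁.sqrt)
        = hΩ₁.sqrt * (hM₀.sqrt * hM₀.sqrt) * hΩ₁.sqrt by simp only [Matrix.mul_assoc],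
      hM₀.sqrt_mul_self, Matrix.trace_mul_cycle, hΩ₁.sqrt_mul_self, Matrix.trace_mul_comm]
  have ht₂ : (Bᴴ * B).trace = (M₀ * Ω₂).trace := by
    rw [hB, Matrix.conjTranspose_mul, hM₀.posSemidef_sqrt.1.eq, hΩ₂.posSemidef_sqrt.1.eq]
    rw [show hΩ₂.sqrt * hM₀.sqrt * (hM₀.sqrt * hΩ₂.sqrt)
        = hΩ₂.sqrt * (hM₀.sqrt * hM₀.sqrt) * hΩ₂.sqrt by simp only [Matrix.mul_assoc],
      hM₀.sqrt_mul_self, Matrix.trace_mul_cycle, hΩ₂.sqrt_mul_self, Matrix.trace_mul_comm]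
  set t₁ : ℝ := (M₀ * Ω₁).trace.re with hT1
  set t₂ : ℝ := (M₀ * Ω₂).trace.re with hT2
  have ht₁nn : 0 ≤ t₁ := trace_psd_mul_nonneg hM₀ hΩ₁
  have ht₂nn : 0 ≤ t₂ := trace_psd_mul_nonneg hM₀ hΩ₂
  -- LHS computation
  have hlhs : ((M₀ * ((η₁ : ℂ) • Ω₁ + (η₂ : ℂ) • Ω₂)).trace).re = η₁ * t₁ + η₂ * t₂ := by
    rw [Matrix.mul_add, Matrix.mul_smul, Matrix.mul_smul, Matrix.trace_add, Matrix.trace_smul,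
      Matrix.trace_smul, Complex.add_re]
    rw [hT1, hT2]
    congr 1 <;> rw [smul_eq_mul, Complex.re_ofReal_mul]
  -- trace norm bound
  have hcs := traceNorm_cs A B
  have htn : traceNorm (hΩ₁.sqrt * S * hΩ₂.sqrt) ≤ Real.sqrt t₁ * Real.sqrt t₂ := by
    rw [hSM]
    calc traceNorm (Aᴴ * B) ≤ Real.sqrt ((Aᴴ * A).trace.re) * Real.sqrt ((Bᴴ * B).trace.re) := hcs
    _ = Real.sqrt t₁ * Real.sqrt t₂ := by rw [ht₁, ht₂]
  -- AM-GM
  rw [hlhs, ge_iff_le]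
  calc 2 * Real.sqrt (η₁ * η₂) * traceNorm (hΩ₁.sqrt * S * hΩ₂.sqrt)
      ≤ 2 * Real.sqrt (η₁ * η₂) * (Real.sqrt t₁ * Real.sqrt t₂) := by
        apply mul_le_mul_of_nonneg_left htn
        positivity
  _ = 2 * (Real.sqrt (η₁ * t₁) * Real.sqrt (η₂ * t₂)) := by
        rw [Real.sqrt_mul hη₁ η₂, Real.sqrt_mul hη₁ t₁, Real.sqrt_mul hη₂ t₂]
        ring
  _ ≤ η₁ * t₁ + η₂ * t₂ := by
        nlinarith [sq_nonneg (Real.sqrt (η₁ * t₁) - Real.sqrt (η₂ * t₂)),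
          Real.sq_sqrt (mul_nonneg hη₁ ht₁nn), Real.sq_sqrt (mul_nonneg hη₂ ht₂nn)]
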